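/- (Confinement near an almost-critical point, Proposition 1.) Assume the C³ setting. Suppose the weak discriminant condition holds in the ball of radius η₁*: for every unit vector v and every real s with |s| ≤ η₁*, |H'|_p(v)|·|H'''|_{p+sv}(v)| < (3/8)(H''|_p(v))². Then every continuous path q : [0,1] → ℝⁿ with q(0) = p and H(q(t)) ≤ H(p) for all t satisfies |q(t) − p| ≤ η₁* for all t ∈ [0,1]. -/

import Mathlib

noncomputable section

/-- The `k`-th directional derivative `H^{(k)}|_q(v) = (d/dt)^k H(q + t v)` at `t = 0`. -/
def dirDeriv {E : Type*} [NormedAddCommGroup E] [NormedSpace ℝ E]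
    (H : E → ℝ) (k : ℕ) (q v : E) : ℝ :=
  iteratedDeriv k (fun t : ℝ => H (q + t • v)) 0

/-- `ā(v,r) = max_{|s| ≤ r} (1/6)|H'''|_{p+sv}(v)|`. -/
def thirdDerivMax {E : Type*} [NormedAddCommGroup E] [NormedSpace ℝ E]
    (H : E → ℝ) (p : E) (v : E) (r : ℝ) : ℝ :=
  sSup ((fun s : ℝ => (1 / 6) * |dirDeriv H 3 (p + s • v) v|) '' Set.Icc (-r) r)

open Set

namespace Conf

variable {E : Type*} [NormedAddCommGroup E] [NormedSpace ℝ E] {H : E → ℝ}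

lemma contDiff_line (hH : ContDiff ℝ 3 H) (x v : E) :
    ContDiff ℝ 3 (fun t : ℝ => H (x + t • v)) :=
  hH.comp (contDiff_const.add (contDiff_id.smul contDiff_const))

lemma dirDeriv_shift (H : E → ℝ) (k : ℕ) (x v : E) (s : ℝ) :
    dirDeriv H k (x + s • v) v = iteratedDeriv k (fun t : ℝ => H (x + t • v)) s := by
  unfold dirDeriv
  have h : (fun t : ℝ => H (x + s • v + t • v))
      = fun t : ℝ => (fun u : ℝ => H (x + u • v)) (s + t) := by
    funext t
    simp only [add_smul, add_assoc]
  rw [h]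
  have := iteratedDeriv_comp_const_add k (fun u : ℝ => H (x + u • v)) s
  calc iteratedDeriv k ((fun u : ℝ => H (x + u • v)) ∘ (fun t => s + t)) 0
      = iteratedDeriv k (fun z : ℝ => (fun u : ℝ => H (x + u • v)) (s + z)) 0 := rfl
    _ = iteratedDeriv k (fun u : ℝ => H (x + u • v)) (s + 0) := by rw [this]
    _ = _ := by rw [add_zero]

lemma dirDeriv_eq_iteratedFDeriv (hH : ContDiff ℝ 3 H) (k : ℕ) (hk : k ≤ 3) (x v : E) :
    dirDeriv H k x v = iteratedFDeriv ℝ k H x (fun _ => v) := by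
  induction k generalizing x with
  | zero => simp [dirDeriv, iteratedFDeriv_zero_apply]
  | succ k ih =>
    have hk' : k ≤ 3 := by omega
    have hklt : (k : WithTop ℕ∞) < 3 := by exact_mod_cast (by omega : k < 3)
    have hrw : (fun t : ℝ => iteratedDeriv k (fun u : ℝ => H (x + u • v)) t)
        = fun t : ℝ => iteratedFDeriv ℝ k H (x + t • v) (fun _ => v) := by
      funext t
      rw [← dirDeriv_shift, ih hk']
    have hline : HasDerivAt (fun t : ℝ => x + t • v) v 0 := by
      simpa using ((hasDerivAt_id (0:ℝ)).smul_const v).const_add x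
    have hdiff : DifferentiableAt ℝ (iteratedFDeriv ℝ k H) x :=
      (hH.differentiable_iteratedFDeriv hklt).differentiableAt
    have hcomp : HasDerivAt (fun t : ℝ => iteratedFDeriv ℝ k H (x + t • v))
        (fderiv ℝ (iteratedFDeriv ℝ k H) x v) 0 := by
      have h0 : HasFDerivAt (iteratedFDeriv ℝ k H) (fderiv ℝ (iteratedFDeriv ℝ k H) x) (x + (0:ℝ) • v) := by
        simpa using hdiff.hasFDerivAt
      have := h0.comp_hasDerivAt (f := fun t : ℝ => x + t • v) (0:ℝ) (by simpa using hline)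
      exact this
    have happ : HasDerivAt (fun t : ℝ => iteratedFDeriv ℝ k H (x + t • v) (fun _ => v))
        ((fderiv ℝ (iteratedFDeriv ℝ k H) x v) (fun _ => v)) 0 := by
      have := (ContinuousMultilinearMap.apply ℝ (fun _ : Fin k => E) ℝ
        (fun _ => v)).hasFDerivAt.comp_hasDerivAt (0:ℝ) hcomp
      exact this
    have : dirDeriv H (k+1) x v
        = deriv (fun t : ℝ => iteratedFDeriv ℝ k H (x + t • v) (fun _ => v)) 0 := by
      unfold dirDeriv
      rw [iteratedDeriv_succ]
      exact congrArg (fun f => deriv f 0) hrw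
    rw [this, happ.deriv, iteratedFDeriv_succ_apply_left]
    rfl

end Conf
open Set
namespace Conf2

lemma iteratedDerivWithin_eq (k : ℕ) {f : ℝ → ℝ} (hf : ContDiff ℝ 3 f) (hk : k ≤ 3)
    {a b : ℝ} (hab : a < b) : ∀ x ∈ Icc a b,
    iteratedDerivWithin k f (Icc a b) x = iteratedDeriv k f x := by
  induction k with
  | zero => intro x hx; simp [iteratedDerivWithin_zero, iteratedDeriv_zero]
  | succ k ih =>
    intro x hx
    have hk' : k ≤ 3 := by omega
    have hklt : (k : WithTop ℕ∞) < 3 := by exact_mod_cast (by omega : k < 3)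
    have hud := (uniqueDiffOn_Icc hab) x hx
    rw [iteratedDerivWithin_succ,
      derivWithin_congr (fun y hy => ih hk' y hy) (ih hk' x hx),
      ((hf.differentiable_iteratedDeriv k hklt) x).derivWithin hud,
      iteratedDeriv_succ]

lemma taylor3 {E : Type*} [NormedAddCommGroup E] [NormedSpace ℝ E] {H : E → ℝ}
    (hH : ContDiff ℝ 3 H) (p v : E) {s : ℝ} (hs : 0 < s) :
    ∃ ξ ∈ Ioo 0 s, H (p + s • v) = H p + dirDeriv H 1 p v * s
      + (1/2) * dirDeriv H 2 p v * s^2 + (1/6) * dirDeriv H 3 (p + ξ • v) v * s^3 := by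
  set g : ℝ → ℝ := fun t => H (p + t • v) with hg
  have hgc : ContDiff ℝ 3 g := Conf.contDiff_line hH p v
  have h0 : (0:ℝ) ∈ Icc 0 s := ⟨le_refl _, hs.le⟩
  have hcd : ContDiffOn ℝ 2 g (Icc 0 s) := (hgc.of_le (by norm_num)).contDiffOn
  have hdiff : DifferentiableOn ℝ (iteratedDerivWithin 2 g (Icc 0 s)) (Ioo 0 s) := by
    apply DifferentiableOn.congr
      (f := iteratedDeriv 2 g)
      (((hgc.differentiable_iteratedDeriv 2 (by exact_mod_cast (by norm_num : (2:ℕ) < 3))).differentiableOn))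
    exact fun x hx => iteratedDerivWithin_eq 2 hgc (by norm_num) hs x (Ioo_subset_Icc_self hx)
  obtain ⟨ξ, hξ, heq⟩ := taylor_mean_remainder_lagrange (n := 2) hs.ne (by rwa [uIcc_of_le hs.le]) (by rwa [uIcc_of_le hs.le, uIoo_of_le hs.le])
  rw [uIcc_of_le hs.le] at heq
  rw [uIoo_of_le hs.le] at hξ
  refine ⟨ξ, hξ, ?_⟩
  rw [taylor_within_apply] at heq
  have e3 : iteratedDerivWithin 3 g (Icc 0 s) ξ = dirDeriv H 3 (p + ξ • v) v := by
    rw [iteratedDerivWithin_eq 3 hgc (le_refl _) hs ξ (Ioo_subset_Icc_self hξ),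
      Conf.dirDeriv_shift]
  have e0 : ∀ k, k ≤ 3 → iteratedDerivWithin k g (Icc 0 s) 0 = dirDeriv H k p v := by
    intro k hk
    rw [iteratedDerivWithin_eq k hgc hk hs 0 h0]
    have : dirDeriv H k p v = iteratedDeriv k g 0 := by
      have := Conf.dirDeriv_shift H k p v 0
      simpa using this
    rw [this]
  rw [Finset.sum_range_succ, Finset.sum_range_succ, Finset.sum_range_one] at heq
  rw [e0 0 (by norm_num), e0 1 (by norm_num), e0 2 (by norm_num), e3] at heq
  have hgs : g s = H (p + s • v) := rfl
  have hg0 : dirDeriv H 0 p v = H p := by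
    simp [dirDeriv, iteratedDeriv_zero]
  rw [hg0] at heq
  simp only [smul_eq_mul] at heq
  norm_num [Nat.factorial] at heq
  rw [hgs] at heq
  linarith [heq]

end Conf2
open Set
namespace Conf3

variable {E : Type*} [NormedAddCommGroup E] [NormedSpace ℝ E] {H : E → ℝ}

lemma continuous_dirDeriv_pair (hH : ContDiff ℝ 3 H) (p : E) (k : ℕ) (hk : k ≤ 3) :
    Continuous (fun xs : E × ℝ => dirDeriv H k (p + xs.2 • xs.1) xs.1) := by
  have hrw : (fun xs : E × ℝ => dirDeriv H k (p + xs.2 • xs.1) xs.1)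
      = fun xs : E × ℝ => iteratedFDeriv ℝ k H (p + xs.2 • xs.1) (fun _ : Fin k => xs.1) := by
    funext xs
    exact Conf.dirDeriv_eq_iteratedFDeriv hH k hk _ _
  rw [hrw]
  have h1 : Continuous (fun xs : E × ℝ => iteratedFDeriv ℝ k H (p + xs.2 • xs.1)) :=
    (hH.continuous_iteratedFDeriv (by exact_mod_cast hk)).comp
      (continuous_const.add (continuous_snd.smul continuous_fst))
  exact h1.eval (continuous_pi fun _ => continuous_fst)

lemma continuous_dirDeriv (hH : ContDiff ℝ 3 H) (p : E) (k : ℕ) (hk : k ≤ 3) :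
    Continuous (fun v : E => dirDeriv H k p v) := by
  have h := (continuous_dirDeriv_pair hH p k hk).comp
    (continuous_id.prodMk (continuous_const : Continuous fun _ : E => (0:ℝ)))
  have : (fun v : E => dirDeriv H k p v)
      = ((fun xs : E × ℝ => dirDeriv H k (p + xs.2 • xs.1) xs.1) ∘ fun x => (x, (0:ℝ))) := by
    funext v; simp
  rw [this]; exact h

/-- Berge-type continuity of a parametrized sup over a compact interval. -/
lemma continuous_sup_param [ProperSpace E] {α : E × ℝ → ℝ} (hα : Continuous α) {r : ℝ} (hr : 0 ≤ r) :
    Continuous (fun x : E => sSup ((fun s => α (x, s)) '' Icc (-r) r)) := by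
  have hKne : (Icc (-r) r).Nonempty := ⟨0, by constructor <;> linarith⟩
  rw [continuous_iff_continuousAt]
  intro x₀
  rw [Metric.continuousAt_iff]
  intro ε hε
  have hS : IsCompact ((Metric.closedBall x₀ 1) ×ˢ Icc (-r) r) :=
    (isCompact_closedBall x₀ 1).prod isCompact_Icc
  have huc := hS.uniformContinuousOn_of_continuous hα.continuousOn
  rw [Metric.uniformContinuousOn_iff] at huc
  obtain ⟨δ, hδ, hd⟩ := huc (ε/2) (by linarith)
  refine ⟨min δ 1, by positivity, fun {x} hx => ?_⟩
  have hx1 : x ∈ Metric.closedBall x₀ 1 := by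
    have : dist x x₀ < 1 := lt_of_lt_of_le hx (min_le_right _ _)
    exact Metric.mem_closedBall.2 this.le
  have hx0 : x₀ ∈ Metric.closedBall x₀ 1 := Metric.mem_closedBall_self (by norm_num)
  have key : ∀ s ∈ Icc (-r) r, |α (x, s) - α (x₀, s)| ≤ ε/2 := by
    intro s hs
    have := hd (x, s) (mk_mem_prod hx1 hs) (x₀, s) (mk_mem_prod hx0 hs)
      (by rw [Prod.dist_eq]
          simp only [dist_self]
          exact max_lt (lt_of_lt_of_le hx (min_le_left _ _)) hδ)
    rw [Real.dist_eq] at this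
    exact this.le
  set φ := fun y : E => sSup ((fun s => α (y, s)) '' Icc (-r) r) with hφ
  have hb : ∀ y : E, BddAbove ((fun s => α (y, s)) '' Icc (-r) r) := fun y =>
    (isCompact_Icc.image (hα.comp (continuous_const.prodMk continuous_id) : Continuous fun s : ℝ => α (y, s))).bddAbove
  have hne : ∀ y : E, ((fun s => α (y, s)) '' Icc (-r) r).Nonempty := fun y => hKne.image _
  have h1 : φ x ≤ φ x₀ + ε/2 := by
    apply csSup_le (hne x)
    rintro z ⟨s, hs, rfl⟩
    have := key s hs
    have h2 : α (x₀, s) ≤ φ x₀ := le_csSup (hb x₀) ⟨s, hs, rfl⟩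
    have : α (x, s) - α (x₀, s) ≤ ε/2 := (abs_le.1 this).2
    linarith
  have h2 : φ x₀ ≤ φ x + ε/2 := by
    apply csSup_le (hne x₀)
    rintro z ⟨s, hs, rfl⟩
    have := key s hs
    have h2 : α (x, s) ≤ φ x := le_csSup (hb x) ⟨s, hs, rfl⟩
    have : α (x₀, s) - α (x, s) ≤ ε/2 := by
      have := (abs_le.1 this).1; linarith
    linarith
  rw [Real.dist_eq]
  rw [abs_lt]
  constructor <;> simp only [hφ] at h1 h2 ⊢ <;> linarith

end Conf3
open Set Topology Filter
set_option maxHeartbeats 1000000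
namespace Conf4

variable {E : Type*} [NormedAddCommGroup E] [NormedSpace ℝ E] [ProperSpace E] {H : E → ℝ}

theorem core (hH : ContDiff ℝ 3 H) (p : E) {lam r : ℝ} (hlam : 0 < lam) (hr : 0 < r)
    (hHess : ∀ v : E, ‖v‖ = 1 → 2 * lam ≤ dirDeriv H 2 p v)
    (hc2 : ∀ v : E, ‖v‖ = 1 → 2 * |dirDeriv H 1 p v| ≤ (1/2) * dirDeriv H 2 p v * r)
    (hd : ∀ v : E, ‖v‖ = 1 → ∀ s : ℝ, |s| ≤ r →
      |dirDeriv H 1 p v| * |dirDeriv H 3 (p + s • v) v| < (3/8) * (dirDeriv H 2 p v)^2)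
    (q : ℝ → E) (hq : ContinuousOn q (Icc 0 1)) (hq0 : q 0 = p)
    (hHq : ∀ t ∈ Icc (0:ℝ) 1, H (q t) ≤ H p) :
    ∀ t ∈ Icc (0:ℝ) 1, ‖q t - p‖ ≤ r := by
  -- basic objects
  set c : E → ℝ := fun v => dirDeriv H 1 p v with hc_def
  set b : E → ℝ := fun v => (1/2) * dirDeriv H 2 p v with hb_def
  set α : E × ℝ → ℝ := fun xs => (1/6) * |dirDeriv H 3 (p + xs.2 • xs.1) xs.1| with hα_def
  have hαc : Continuous α :=
    continuous_const.mul (Conf3.continuous_dirDeriv_pair hH p 3 le_rfl).abs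
  set a : E → ℝ := fun v => sSup ((fun s => α (v, s)) '' Icc (-r) r) with ha_def
  have hac : Continuous a := Conf3.continuous_sup_param hαc hr.le
  have hbc : Continuous b := continuous_const.mul (Conf3.continuous_dirDeriv hH p 2 (by norm_num))
  have hKne : (Icc (-r) r).Nonempty := ⟨0, by constructor <;> linarith⟩
  have haim : ∀ v : E, IsCompact ((fun s => α (v, s)) '' Icc (-r) r) :=
    fun v => isCompact_Icc.image (hαc.comp (continuous_const.prodMk continuous_id))
  have hale : ∀ (v : E) (s : ℝ), |s| ≤ r → (1/6) * |dirDeriv H 3 (p + s • v) v| ≤ a v := by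
    intro v s hs
    exact le_csSup (haim v).bddAbove ⟨s, by rwa [mem_Icc, ← abs_le], rfl⟩
  have ha0 : ∀ v : E, 0 ≤ a v := by
    intro v
    have := hale v 0 (by simp [hr.le])
    have h0 : (0:ℝ) ≤ (1/6) * |dirDeriv H 3 (p + (0:ℝ) • v) v| := by positivity
    linarith
  have hbl : ∀ v : E, ‖v‖ = 1 → lam ≤ b v := by
    intro v hv; have := hHess v hv; rw [hb_def]; simp only; linarith
  -- strict discriminant inequality
  have hdisc : ∀ v : E, ‖v‖ = 1 → |c v| * a v < (b v)^2 / 4 := by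
    intro v hv
    obtain ⟨s₀, hs₀, hs₀eq⟩ := (haim v).sSup_mem (hKne.image _)
    have hs₀r : |s₀| ≤ r := abs_le.2 (mem_Icc.1 hs₀)
    have h := hd v hv s₀ hs₀r
    have hav : a v = (1/6) * |dirDeriv H 3 (p + s₀ • v) v| := hs₀eq.symm
    have hD2 : dirDeriv H 2 p v = 2 * b v := by rw [hb_def]; ring
    rw [hD2] at h
    rw [hav, hc_def]
    nlinarith [abs_nonneg (dirDeriv H 1 p v), abs_nonneg (dirDeriv H 3 (p + s₀ • v) v)]
  -- the barrier radius
  set m : E → ℝ := fun v => min r (b v / (2 * max (a v) (b v / (2*r)))) with hm_def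
  have hmr : ∀ v : E, m v ≤ r := fun v => min_le_left _ _
  have hmpos : ∀ v : E, ‖v‖ = 1 → 0 < m v := by
    intro v hv
    have hB : 0 < b v := lt_of_lt_of_le hlam (hbl v hv)
    have hM : 0 < max (a v) (b v / (2*r)) :=
      lt_of_lt_of_le (by positivity) (le_max_right _ _)
    exact lt_min hr (div_pos hB (by linarith))
  have hbarrier : ∀ v : E, ‖v‖ = 1 → 0 < b v * m v - |c v| - a v * (m v)^2 := by
    intro v hv
    have hB : 0 < b v := lt_of_lt_of_le hlam (hbl v hv)
    have hC : 2 * |c v| ≤ b v * r := hc2 v hv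
    have hCA := hdisc v hv
    have hA0 := ha0 v
    rcases le_total (a v) (b v / (2*r)) with hle | hle
    · -- m v = r
      have hMeq : max (a v) (b v / (2*r)) = b v / (2*r) := max_eq_right hle
      have hmv : m v = r := by
        rw [hm_def]; simp only [hMeq]
        have : b v / (2 * (b v / (2*r))) = r := by
          field_simp
        rw [this, min_self]
      rw [hmv]
      have har : a v * r^2 ≤ b v * r / 2 := by
        have := mul_le_mul_of_nonneg_right hle (by positivity : (0:ℝ) ≤ r^2)
        have hrr : b v / (2*r) * r^2 = b v * r / 2 := by field_simp
        linarith [hrr ▸ this]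
      have hcr : |c v| ≤ b v * r / 2 := by linarith
      nlinarith [mul_nonneg (sub_nonneg.2 hcr) (sub_nonneg.2 har),
        mul_lt_mul_of_pos_right hCA (by positivity : (0:ℝ) < r^2),
        abs_nonneg (c v), mul_pos hB hr]
    · -- m v = b v / (2 * a v)
      have hA : 0 < a v := lt_of_lt_of_le (by positivity) hle
      have hMeq : max (a v) (b v / (2*r)) = a v := max_eq_left hle
      have hble : b v / (2 * a v) ≤ r := by
        rw [div_le_iff₀ (by positivity)]
        rw [div_le_iff₀ (by positivity)] at hle
        nlinarith
      have hmv : m v = b v / (2 * a v) := by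
        rw [hm_def]; simp only [hMeq]; exact min_eq_right hble
      rw [hmv]
      have hCA' : |c v| * a v < (b v)^2 / 4 := hCA
      have expand : b v * (b v / (2 * a v)) - |c v| - a v * (b v / (2 * a v))^2
          = (b v)^2 / (4 * a v) - |c v| := by
        field_simp; ring
      rw [expand, sub_pos, lt_div_iff₀ (by positivity)]
      nlinarith
  -- uniform lower bound on m over the unit sphere
  obtain ⟨Ca, hCa⟩ := (isCompact_sphere (0:E) 1).exists_bound_of_continuousOn hac.continuousOn
  obtain ⟨Cb, hCb⟩ := (isCompact_sphere (0:E) 1).exists_bound_of_continuousOn hbc.continuousOn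
  set KA := max Ca 0 with hKA
  set KB := max Cb lam with hKB
  set D := max KA (KB / (2*r)) with hD
  have hKB0 : 0 < KB := lt_of_lt_of_le hlam (le_max_right _ _)
  have hD0 : 0 < D := lt_of_lt_of_le (by positivity) (le_max_right _ _)
  set m₀ := min r (lam / (2 * D)) with hm₀
  have hm₀pos : 0 < m₀ := lt_min hr (div_pos hlam (by linarith))
  have hm₀le : ∀ v : E, ‖v‖ = 1 → m₀ ≤ m v := by
    intro v hv
    have hvs : v ∈ Metric.sphere (0:E) 1 := by simpa using hv
    have hA : a v ≤ KA := le_trans (le_trans (le_abs_self _) (hCa v hvs)) (le_max_left _ _)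
    have hBv : b v ≤ KB := le_trans (le_trans (le_abs_self _) (hCb v hvs)) (le_max_left _ _)
    have hB : 0 < b v := lt_of_lt_of_le hlam (hbl v hv)
    have hM : 0 < max (a v) (b v / (2*r)) :=
      lt_of_lt_of_le (by positivity) (le_max_right _ _)
    have hMD : max (a v) (b v / (2*r)) ≤ D := by
      apply max_le
      · exact le_trans hA (le_max_left _ _)
      · refine le_trans ?_ (le_max_right KA (KB / (2*r)))
        gcongr
    apply min_le_min le_rfl
    rw [div_le_div_iff₀ (by linarith) (by linarith)]
    nlinarith [hbl v hv, mul_le_mul hBv hMD hM.le hKB0.le]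
  -- the barrier property via Taylor
  have hkey : ∀ v : E, ‖v‖ = 1 → H p < H (p + (m v) • v) := by
    intro v hv
    obtain ⟨ξ, hξ, heq⟩ := Conf2.taylor3 hH p v (hmpos v hv)
    have hξr : |ξ| ≤ r := by
      rw [abs_le]
      constructor
      · linarith [hξ.1, hr]
      · linarith [hξ.2, hmr v]
    have hT := hale v ξ hξr
    have hTlow : -(a v) * (m v)^3 ≤ (1/6) * dirDeriv H 3 (p + ξ • v) v * (m v)^3 := by
      have h1 : -(a v) ≤ (1/6) * dirDeriv H 3 (p + ξ • v) v := by
        have := neg_abs_le ((1/6) * dirDeriv H 3 (p + ξ • v) v)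
        rw [abs_mul] at this
        have h6 : |(1/6 : ℝ)| = 1/6 := by norm_num
        rw [h6] at this
        linarith
      have := mul_le_mul_of_nonneg_right h1 (le_of_lt (pow_pos (hmpos v hv) 3))
      linarith
    have hclow : -|c v| * m v ≤ dirDeriv H 1 p v * m v := by
      have := neg_abs_le (dirDeriv H 1 p v)
      have := mul_le_mul_of_nonneg_right this (le_of_lt (hmpos v hv))
      rw [hc_def]; simp only; linarith
    have hbb : (1/2) * dirDeriv H 2 p v * (m v)^2 = b v * (m v)^2 := by
      rw [hb_def]
    have hbar := hbarrier v hv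
    have hfac : 0 < (b v * m v - |c v| - a v * (m v)^2) * m v :=
      mul_pos hbar (hmpos v hv)
    nlinarith [heq, hTlow, hclow]
  -- the path argument
  intro t₁ ht₁
  by_contra hgt
  push_neg at hgt
  set u : ℝ → ℝ := fun t => ‖q t - p‖ with hu_def
  have hu : ContinuousOn u (Icc 0 1) := (hq.sub continuousOn_const).norm
  have ht₁01 := ht₁
  obtain ⟨ht₁0, ht₁1⟩ := mem_Icc.1 ht₁
  -- the set of zeros of u before t₁
  set Z := {t | t ∈ Icc 0 t₁ ∧ u t = 0} with hZ
  have hZsub : Z ⊆ Icc 0 t₁ := fun t ht => ht.1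
  have hZne : Z.Nonempty := ⟨0, ⟨le_refl _, ht₁0⟩, by simp [hu_def, hq0]⟩
  have hZclosed : IsClosed Z := by
    have : Z = Icc 0 t₁ ∩ u ⁻¹' {0} := by
      ext t; simp [hZ, mem_preimage]
    rw [this]
    exact (hu.mono (Icc_subset_Icc le_rfl ht₁1)).preimage_isClosed_of_isClosed
      isClosed_Icc isClosed_singleton
  have hZcpt : IsCompact Z := isCompact_Icc.of_isClosed_subset hZclosed hZsub
  set t₀ := sSup Z with ht₀_def
  have ht₀Z : t₀ ∈ Z := hZcpt.sSup_mem hZne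
  have ht₀Icc : t₀ ∈ Icc 0 t₁ := ht₀Z.1
  have hu0 : u t₀ = 0 := ht₀Z.2
  have ht₀lt : t₀ < t₁ := by
    rcases lt_or_eq_of_le ht₀Icc.2 with h | h
    · exact h
    · exfalso; rw [h] at hu0; rw [hu_def] at hu0; simp only at hu0; linarith [hgt]
  have hIsub : Ioc t₀ t₁ ⊆ Icc 0 1 := fun t ht =>
    ⟨le_trans ht₀Icc.1 ht.1.le, le_trans ht.2 ht₁1⟩
  have hpos : ∀ t ∈ Ioc t₀ t₁, 0 < u t := by
    intro t ht
    rcases (norm_nonneg (q t - p)).lt_or_eq with h | h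
    · exact h
    · exfalso
      have htZ : t ∈ Z := ⟨⟨le_trans ht₀Icc.1 ht.1.le, ht.2⟩, h.symm⟩
      exact absurd (le_csSup hZcpt.bddAbove htZ) (not_le.2 ht.1)
  -- find t₂ close to t₀ with u t₂ < m₀
  have hcw : ContinuousWithinAt u (Ioc t₀ t₁) t₀ :=
    (hu t₀ ⟨ht₀Icc.1, le_trans ht₀Icc.2 ht₁1⟩).mono hIsub
  haveI hnb : (𝓝[Ioc t₀ t₁] t₀).NeBot := by
    apply mem_closure_iff_nhdsWithin_neBot.1
    rw [closure_Ioc (ne_of_lt ht₀lt)]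
    exact ⟨le_refl t₀, ht₀lt.le⟩
  have h0m : u t₀ < m₀ := by rw [hu0]; exact hm₀pos
  have hev : ∀ᶠ t in 𝓝[Ioc t₀ t₁] t₀, u t < m₀ := hcw.eventually_lt_const h0m
  obtain ⟨t₂, ht₂u, ht₂mem⟩ := (hev.and eventually_mem_nhdsWithin).exists
  set w : ℝ → E := fun t => (u t)⁻¹ • (q t - p) with hw_def
  have hsub2 : Icc t₂ t₁ ⊆ Ioc t₀ t₁ := fun t ht => ⟨lt_of_lt_of_le ht₂mem.1 ht.1, ht.2⟩
  have hsub3 : Icc t₂ t₁ ⊆ Icc 0 1 := fun t ht => hIsub (hsub2 ht)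
  have hwu : ∀ t ∈ Ioc t₀ t₁, ‖w t‖ = 1 := by
    intro t ht
    show ‖(u t)⁻¹ • (q t - p)‖ = 1
    rw [norm_smul, Real.norm_eq_abs, abs_inv, abs_of_pos (hpos t ht)]
    exact inv_mul_cancel₀ (hpos t ht).ne'
  have hqc2 : ContinuousOn q (Icc t₂ t₁) := hq.mono hsub3
  have huc2 : ContinuousOn u (Icc t₂ t₁) := hu.mono hsub3
  have hune : ∀ t ∈ Icc t₂ t₁, u t ≠ 0 := fun t ht => (hpos t (hsub2 ht)).ne'
  have hwc : ContinuousOn w (Icc t₂ t₁) :=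
    (huc2.inv₀ hune).smul (hqc2.sub continuousOn_const)
  have hawc : ContinuousOn (fun t => a (w t)) (Icc t₂ t₁) := hac.comp_continuousOn hwc
  have hbwc : ContinuousOn (fun t => b (w t)) (Icc t₂ t₁) := hbc.comp_continuousOn hwc
  have hdenne : ∀ t ∈ Icc t₂ t₁, 2 * max (a (w t)) (b (w t) / (2*r)) ≠ 0 := by
    intro t ht
    have hB : 0 < b (w t) := lt_of_lt_of_le hlam (hbl _ (hwu t (hsub2 ht)))
    have hM : 0 < max (a (w t)) (b (w t)/(2*r)) :=
      lt_of_lt_of_le (div_pos hB (by linarith)) (le_max_right _ _)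
    exact (mul_pos two_pos hM).ne'
  have hmwc : ContinuousOn (fun t => m (w t)) (Icc t₂ t₁) := by
    simp only [hm_def]
    exact ContinuousOn.inf continuousOn_const
      (hbwc.div (continuousOn_const.mul (ContinuousOn.sup hawc (hbwc.div_const _))) hdenne)
  set h : ℝ → ℝ := fun t => u t - m (w t) with hh_def
  have hhc : ContinuousOn h (Icc t₂ t₁) := huc2.sub hmwc
  have hht₂ : h t₂ < 0 := by
    have h1 := hm₀le (w t₂) (hwu t₂ ht₂mem)
    rw [hh_def]; simp only; linarith
  have hht₁ : 0 < h t₁ := by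
    have h1 := hmr (w t₁)
    have h2 : r < u t₁ := hgt
    rw [hh_def]; simp only; linarith
  obtain ⟨ts, htsmem, hts0⟩ := intermediate_value_Icc ht₂mem.2 hhc ⟨hht₂.le, hht₁.le⟩
  have htsI : ts ∈ Ioc t₀ t₁ := hsub2 htsmem
  have hwts : ‖w ts‖ = 1 := hwu ts htsI
  have hupos := hpos ts htsI
  have hueq : u ts = m (w ts) := by
    rw [hh_def] at hts0; simp only at hts0; linarith
  have hqts : p + (m (w ts)) • (w ts) = q ts := by
    rw [← hueq, hw_def]
    simp only
    rw [smul_smul, mul_inv_cancel₀ hupos.ne', one_smul]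
    abel
  have hcontr := hkey (w ts) hwts
  rw [hqts] at hcontr
  exact absurd (hHq ts (hsub3 htsmem)) (not_le.2 hcontr)

end Conf4
open Set

/-- **Proposition 1 (Confinement near an almost-critical point).** Let `H` be `C³`, with
`H''|_p(v) ≥ 2λ > 0` for all unit `v`, and `η₁* = max_{|v|=1} 2|c(v)|/b(v)`. If the weak
discriminant condition `|H'|_p(v)|·|H'''|_{p+sv}(v)| < (3/8)(H''|_p(v))²` holds for all unit
`v` and `|s| ≤ η₁*`, then every continuous path starting at `p` along which `H` does not
exceed `H(p)` stays within distance `η₁*` of `p`. -/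
theorem confinement_near_almost_critical (n : ℕ) (hn : 0 < n)
    (H : EuclideanSpace ℝ (Fin n) → ℝ) (hH : ContDiff ℝ 3 H)
    (p : EuclideanSpace ℝ (Fin n)) (lam : ℝ) (hlam : 0 < lam)
    (hHess : ∀ v : EuclideanSpace ℝ (Fin n), ‖v‖ = 1 → 2 * lam ≤ dirDeriv H 2 p v)
    (η₁ : ℝ)
    (hη₁ : η₁ = sSup {x : ℝ | ∃ v : EuclideanSpace ℝ (Fin n), ‖v‖ = 1 ∧
      x = 2 * |dirDeriv H 1 p v| / ((1 / 2) * dirDeriv H 2 p v)})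
    (hweak : ∀ v : EuclideanSpace ℝ (Fin n), ‖v‖ = 1 → ∀ s : ℝ, |s| ≤ η₁ →
      |dirDeriv H 1 p v| * |dirDeriv H 3 (p + s • v) v| < (3 / 8) * (dirDeriv H 2 p v) ^ 2)
    (q : ℝ → EuclideanSpace ℝ (Fin n))
    (hq : ContinuousOn q (Set.Icc 0 1)) (hq0 : q 0 = p)
    (hHq : ∀ t ∈ Set.Icc (0:ℝ) 1, H (q t) ≤ H p) :
    ∀ t ∈ Set.Icc (0:ℝ) 1, ‖q t - p‖ ≤ η₁ := by
  have hb : ∀ v : EuclideanSpace ℝ (Fin n), ‖v‖ = 1 → 0 < (1/2) * dirDeriv H 2 p v := by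
    intro v hv; linarith [hHess v hv]
  have hv₀ : ‖(EuclideanSpace.single (⟨0, hn⟩ : Fin n) (1:ℝ) : EuclideanSpace ℝ (Fin n))‖ = 1 := by
    rw [EuclideanSpace.norm_single]; norm_num
  set φ : EuclideanSpace ℝ (Fin n) → ℝ :=
    fun v => 2 * |dirDeriv H 1 p v| / ((1/2) * dirDeriv H 2 p v) with hφ
  have hSim : {x : ℝ | ∃ v : EuclideanSpace ℝ (Fin n), ‖v‖ = 1 ∧ x = φ v}
      = φ '' (Metric.sphere 0 1) := by
    ext x
    simp only [mem_setOf_eq, mem_image, mem_sphere_zero_iff_norm]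
    exact ⟨fun ⟨v, hv, hx⟩ => ⟨v, hv, hx.symm⟩, fun ⟨v, hv, hx⟩ => ⟨v, hv, hx.symm⟩⟩
  have hφc : ContinuousOn φ (Metric.sphere 0 1) := by
    apply ContinuousOn.div
    · exact (continuous_const.mul (Conf3.continuous_dirDeriv hH p 1 (by norm_num)).abs).continuousOn
    · exact (continuous_const.mul (Conf3.continuous_dirDeriv hH p 2 (by norm_num))).continuousOn
    · intro v hv
      exact (hb v (mem_sphere_zero_iff_norm.1 hv)).ne'
  have hbdd : BddAbove {x : ℝ | ∃ v : EuclideanSpace ℝ (Fin n), ‖v‖ = 1 ∧ x = φ v} := by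
    rw [hSim]
    exact ((isCompact_sphere 0 1).image_of_continuousOn hφc).bddAbove
  have hmem : ∀ v : EuclideanSpace ℝ (Fin n), ‖v‖ = 1 → φ v ≤ η₁ := by
    intro v hv
    rw [hη₁]
    exact le_csSup hbdd ⟨v, hv, rfl⟩
  have hη₀ : 0 ≤ η₁ :=
    le_trans (div_nonneg (by positivity) (hb _ hv₀).le) (hmem _ hv₀)
  rcases hη₀.lt_or_eq with hpos | hzero
  · -- η₁ > 0 : apply the core lemma with r = η₁
    have hc2 : ∀ v : EuclideanSpace ℝ (Fin n), ‖v‖ = 1 →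
        2 * |dirDeriv H 1 p v| ≤ (1/2) * dirDeriv H 2 p v * η₁ := by
      intro v hv
      have h1 := hmem v hv
      rw [hφ] at h1
      rw [div_le_iff₀ (hb v hv)] at h1
      linarith
    exact Conf4.core hH p hlam hpos hHess hc2 hweak q hq hq0 hHq
  · -- η₁ = 0
    have hczero : ∀ v : EuclideanSpace ℝ (Fin n), ‖v‖ = 1 → |dirDeriv H 1 p v| = 0 := by
      intro v hv
      have h1 : φ v ≤ 0 := (hmem v hv).trans_eq hzero.symm
      have h2 : 0 ≤ φ v := div_nonneg (by positivity) (hb v hv).le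
      have h3 : φ v = 0 := le_antisymm h1 h2
      rw [hφ, div_eq_zero_iff] at h3
      rcases h3 with h3 | h3
      · linarith [abs_nonneg (dirDeriv H 1 p v)]
      · exact absurd h3 (hb v hv).ne'
    intro t ht
    rw [← hzero]
    have hall : ∀ ε : ℝ, 0 < ε → ‖q t - p‖ ≤ ε := by
      intro ε hε
      have hc2 : ∀ v : EuclideanSpace ℝ (Fin n), ‖v‖ = 1 →
          2 * |dirDeriv H 1 p v| ≤ (1/2) * dirDeriv H 2 p v * ε := by
        intro v hv
        rw [hczero v hv]
        have := hb v hv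
        nlinarith
      have hd : ∀ v : EuclideanSpace ℝ (Fin n), ‖v‖ = 1 → ∀ s : ℝ, |s| ≤ ε →
          |dirDeriv H 1 p v| * |dirDeriv H 3 (p + s • v) v| < (3/8) * (dirDeriv H 2 p v)^2 := by
        intro v hv s hs
        rw [hczero v hv, zero_mul]
        have h2 := hHess v hv
        nlinarith
      exact Conf4.core hH p hlam hε hHess hc2 hd q hq hq0 hHq t ht
    by_contra hgt
    push_neg at hgt
    have := hall (‖q t - p‖ / 2) (by linarith)
    linarith
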